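/- Any GL_3(F)-independent subset of Sub(F^3) consisting only of 1-dimensional subspaces has at most 4 elements. -/

import Mathlib

open Matrix

/-- `S ⊆ Sub(F³)` is `GL₃(F)`-independent if for every `V ∈ S` there is a
`g ∈ GL₃(F)` stabilizing every member of `S \ {V}` but not `V`. -/
def glIndep {F : Type*} [Field F] {n : ℕ} (S : Set (Submodule F (Fin n → F))) : Prop :=
  ∀ V ∈ S, ∃ g : GL (Fin n) F,
    (∀ U ∈ S \ {V},
      U.map ((g : Matrix (Fin n) (Fin n) F).mulVecLin) = U) ∧
    V.map ((g : Matrix (Fin n) (Fin n) F).mulVecLin) ≠ V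

section Aux

variable {F : Type*} [Field F]

lemma pair_of_lines {u v : Fin 3 → F} (hu : u ≠ 0) (hv : v ≠ 0)
    (h : Submodule.span F {u} ≠ Submodule.span F {v}) : LinearIndependent F ![u, v] := by
  rw [LinearIndependent.pair_iff' hu]
  intro a ha
  apply h
  have ha0 : a ≠ 0 := by rintro rfl; simp at ha; exact hv ha.symm
  rw [← ha]
  exact (Submodule.span_singleton_smul_eq (IsUnit.mk0 a ha0) u).symm

lemma eigen_of_fix {g : GL (Fin 3) F} {v : Fin 3 → F}
    (h : (Submodule.span F {v}).map ((g : Matrix (Fin 3) (Fin 3) F).mulVecLin)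
      = Submodule.span F {v}) : ∃ c : F, (g : Matrix (Fin 3) (Fin 3) F) *ᵥ v = c • v := by
  have : (g : Matrix (Fin 3) (Fin 3) F) *ᵥ v ∈ Submodule.span F {v} := by
    rw [← h]
    exact Submodule.mem_map_of_mem (Submodule.mem_span_singleton_self v)
  obtain ⟨c, hc⟩ := Submodule.mem_span_singleton.1 this
  exact ⟨c, hc.symm⟩

lemma fix_of_eigen {g : GL (Fin 3) F} {v : Fin 3 → F} {c : F} (hc : c ≠ 0)
    (h : (g : Matrix (Fin 3) (Fin 3) F) *ᵥ v = c • v) :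
    (Submodule.span F {v}).map ((g : Matrix (Fin 3) (Fin 3) F).mulVecLin)
      = Submodule.span F {v} := by
  rw [Submodule.map_span, Set.image_singleton]
  show Submodule.span F {(g : Matrix (Fin 3) (Fin 3) F) *ᵥ v} = _
  rw [h]
  exact Submodule.span_singleton_smul_eq (IsUnit.mk0 c hc) v

lemma eigen_ne_zero {g : GL (Fin 3) F} {v : Fin 3 → F} {c : F} (hv : v ≠ 0)
    (h : (g : Matrix (Fin 3) (Fin 3) F) *ᵥ v = c • v) : c ≠ 0 := by
  rintro rfl
  apply hv
  have : ((g⁻¹ : GL (Fin 3) F) : Matrix (Fin 3) (Fin 3) F) *ᵥ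
      ((g : Matrix (Fin 3) (Fin 3) F) *ᵥ v) = v := by
    rw [Matrix.mulVec_mulVec, ← Units.val_mul, inv_mul_cancel g, Units.val_one, Matrix.one_mulVec]
  rw [h] at this
  simpa using this.symm


lemma planar {p q u w : Fin 3 → F} (hpq : LinearIndependent F ![p, q])
    {g : Matrix (Fin 3) (Fin 3) F} {cp cq cu : F} {k a b : F}
    (ha : a ≠ 0) (hb : b ≠ 0)
    (hu : k • u = a • p + b • q)
    (hp : g *ᵥ p = cp • p) (hq : g *ᵥ q = cq • q) (hgu : g *ᵥ u = cu • u)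
    {kw xw yw : F} (hkw : kw ≠ 0) (hw : kw • w = xw • p + yw • q) :
    g *ᵥ w = cp • w := by
  have e1 : g *ᵥ (k • u) = a • cp • p + b • cq • q := by
    rw [hu, Matrix.mulVec_add, Matrix.mulVec_smul, Matrix.mulVec_smul, hp, hq]
  have e2 : g *ᵥ (k • u) = cu • (a • p + b • q) := by
    rw [Matrix.mulVec_smul, hgu, smul_comm, hu]
  have key := e1.symm.trans e2
  have hz : (a * (cp - cu)) • p + (b * (cq - cu)) • q = 0 := by
    linear_combination (norm := module) key
  obtain ⟨h1, h2⟩ := LinearIndependent.pair_iff.1 hpq _ _ hz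
  have hcp : cp = cu := sub_eq_zero.1 ((mul_eq_zero.1 h1).resolve_left ha)
  have hcq : cq = cu := sub_eq_zero.1 ((mul_eq_zero.1 h2).resolve_left hb)
  have e3 : kw • (g *ᵥ w) = kw • (cp • w) := by
    rw [← Matrix.mulVec_smul, hw, Matrix.mulVec_add, Matrix.mulVec_smul, Matrix.mulVec_smul,
      hp, hq, hcp, hcq]
    linear_combination (norm := module) (-cu) • hw
  exact smul_right_injective (Fin 3 → F) hkw e3

lemma exists_rep {a b c : Fin 3 → F} (hab : LinearIndependent F ![a, b])
    (hc : ¬ ∃ m n : F, c = m • a + n • b) (w : Fin 3 → F) :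
    ∃ x y z : F, w = x • a + y • b + z • c := by
  have htrip : LinearIndependent F ![c, a, b] := by
    have : (![c, a, b] : Fin 3 → Fin 3 → F) = Fin.cons c ![a, b] := by
      funext i; fin_cases i <;> rfl
    rw [this, linearIndependent_fin_cons]
    refine ⟨hab, fun hmem => hc ?_⟩
    have : Set.range ![a, b] = {a, b} := by
      ext x; simp [Fin.exists_fin_two, or_comm]
    rw [this] at hmem
    obtain ⟨m, n, hmn⟩ := Submodule.mem_span_pair.1 hmem
    exact ⟨m, n, hmn.symm⟩
  have hcard : Fintype.card (Fin 3) = Module.finrank F (Fin 3 → F) := by simp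
  let B := basisOfLinearIndependentOfCardEqFinrank htrip hcard
  have hB : ⇑B = ![c, a, b] := coe_basisOfLinearIndependentOfCardEqFinrank htrip hcard
  have := B.sum_repr w
  rw [Fin.sum_univ_three] at this
  simp only [hB, Matrix.cons_val_zero, Matrix.cons_val_one, Matrix.head_cons,
    Matrix.cons_val_two, Matrix.tail_cons] at this
  exact ⟨B.repr w 1, B.repr w 2, B.repr w 0, by linear_combination (norm := module) - this⟩
lemma no_rel {x y : Fin 3 → F} (h : LinearIndependent F ![x, y]) {s t : F} (hs : s ≠ 0)
    (hst : s • y = t • x) : False := by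
  obtain ⟨-, h2⟩ := LinearIndependent.pair_iff.1 h t (-s)
    (by linear_combination (norm := module) - hst)
  exact hs (by simpa using h2)

lemma killer1 {S : Set (Submodule F (Fin 3 → F))} (hindep : glIndep S)
    {A B C D : Submodule F (Fin 3 → F)} {a b c d : Fin 3 → F}
    (hA : A ∈ S) (hB : B ∈ S) (hC : C ∈ S) (hD : D ∈ S)
    (hBA : B ≠ A) (hCA : C ≠ A) (hDA : D ≠ A)
    (ha : a ≠ 0) (hb : b ≠ 0)
    (hsA : A = Submodule.span F {a}) (hsB : B = Submodule.span F {b})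
    (hsC : C = Submodule.span F {c}) (hsD : D = Submodule.span F {d})
    (iac : LinearIndependent F ![a, c]) (ibc : LinearIndependent F ![b, c])
    (ibd : LinearIndependent F ![b, d]) (icd : LinearIndependent F ![c, d])
    {k1 k2 g1 g2 d1 d2 : F} (hk1 : k1 ≠ 0) (hk2 : k2 ≠ 0)
    (hcrep : k1 • c = g1 • a + g2 • b) (hdrep : k2 • d = d1 • a + d2 • b) : False := by
  obtain ⟨g, hfix, hmove⟩ := hindep A hA
  obtain ⟨cb, hcb⟩ := eigen_of_fix (v := b) (by rw [← hsB]; exact hfix B ⟨hB, hBA⟩)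
  obtain ⟨cc, hcc⟩ := eigen_of_fix (v := c) (by rw [← hsC]; exact hfix C ⟨hC, hCA⟩)
  obtain ⟨cd, hcd⟩ := eigen_of_fix (v := d) (by rw [← hsD]; exact hfix D ⟨hD, hDA⟩)
  have hg1 : g1 ≠ 0 := fun h0 => no_rel ibc hk1
    (by rw [hcrep, h0]; module)
  have hg2 : g2 ≠ 0 := fun h0 => no_rel iac hk1
    (by rw [hcrep, h0]; module)
  have hd1 : d1 ≠ 0 := fun h0 => no_rel ibd hk2
    (by rw [hdrep, h0]; module)
  have hrepd : (g1 * k2) • d = (g1 * d2 - d1 * g2) • b + (d1 * k1) • c := by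
    linear_combination (norm := module) g1 • hdrep - d1 • hcrep
  have hBcoef : g1 * d2 - d1 * g2 ≠ 0 := by
    intro h0
    refine no_rel icd (mul_ne_zero hg1 hk2) (t := d1 * k1) ?_
    linear_combination (norm := module) hrepd + h0 • b
  have hrepa : g1 • a = (-g2) • b + k1 • c := by
    linear_combination (norm := module) - hcrep
  have hfixa := planar ibc hBcoef (mul_ne_zero hd1 hk1) hrepd hcb hcc hcd hg1 hrepa
  exact hmove (by rw [hsA]; exact fix_of_eigen (eigen_ne_zero hb hcb) hfixa)

lemma trip_indep {a b c : Fin 3 → F} (hab : LinearIndependent F ![a, b])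
    (hc : ¬ ∃ m n : F, c = m • a + n • b) : LinearIndependent F ![c, a, b] := by
  have : (![c, a, b] : Fin 3 → Fin 3 → F) = Fin.cons c ![a, b] := by
    funext i; fin_cases i <;> rfl
  rw [this, linearIndependent_fin_cons]
  refine ⟨hab, fun hmem => hc ?_⟩
  have hr : Set.range ![a, b] = {a, b} := by
    ext x; simp [Fin.exists_fin_two, or_comm]
  rw [hr] at hmem
  obtain ⟨m, n, hmn⟩ := Submodule.mem_span_pair.1 hmem
  exact ⟨m, n, hmn.symm⟩

lemma killer2 {S : Set (Submodule F (Fin 3 → F))} (hindep : glIndep S)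
    {A B C D E : Submodule F (Fin 3 → F)} {a b c d e : Fin 3 → F}
    (hA : A ∈ S) (hB : B ∈ S) (hC : C ∈ S) (hD : D ∈ S) (hE : E ∈ S)
    (hAE : A ≠ E) (hBE : B ≠ E) (hCE : C ≠ E) (hDE : D ≠ E)
    (ha : a ≠ 0)
    (hsA : A = Submodule.span F {a}) (hsB : B = Submodule.span F {b})
    (hsC : C = Submodule.span F {c}) (hsD : D = Submodule.span F {d})
    (hsE : E = Submodule.span F {e})
    (iab : LinearIndependent F ![a, b])
    (hcm : ¬ ∃ m n : F, c = m • a + n • b)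
    {k x y z : F} (hk : k ≠ 0) (hx : x ≠ 0) (hy : y ≠ 0) (hz : z ≠ 0)
    (hdrep : k • d = x • a + y • b + z • c) : False := by
  obtain ⟨g, hfix, hmove⟩ := hindep E hE
  obtain ⟨ca, hca⟩ := eigen_of_fix (v := a) (by rw [← hsA]; exact hfix A ⟨hA, hAE⟩)
  obtain ⟨cb, hcb⟩ := eigen_of_fix (v := b) (by rw [← hsB]; exact hfix B ⟨hB, hBE⟩)
  obtain ⟨cc, hcc⟩ := eigen_of_fix (v := c) (by rw [← hsC]; exact hfix C ⟨hC, hCE⟩)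
  obtain ⟨cd, hcd⟩ := eigen_of_fix (v := d) (by rw [← hsD]; exact hfix D ⟨hD, hDE⟩)
  have htrip := trip_indep iab hcm
  set M : Matrix (Fin 3) (Fin 3) F := (g : Matrix (Fin 3) (Fin 3) F)
  have e1 : M *ᵥ (k • d) = x • ca • a + y • cb • b + z • cc • c := by
    rw [hdrep, Matrix.mulVec_add, Matrix.mulVec_add, Matrix.mulVec_smul, Matrix.mulVec_smul,
      Matrix.mulVec_smul, hca, hcb, hcc]
  have e2 : M *ᵥ (k • d) = cd • (x • a + y • b + z • c) := by
    rw [Matrix.mulVec_smul, hcd, smul_comm, hdrep]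
  have key := e1.symm.trans e2
  have hz0 := Fintype.linearIndependent_iff.1 htrip
    ![z * (cc - cd), x * (ca - cd), y * (cb - cd)] (by
      simp only [Fin.sum_univ_three, Matrix.cons_val_zero, Matrix.cons_val_one, Matrix.head_cons,
        Matrix.cons_val_two, Matrix.tail_cons]
      linear_combination (norm := module) key)
  have hcaeq : ca = cd := by
    have := hz0 1
    simp only [Matrix.cons_val_one, Matrix.head_cons] at this
    exact sub_eq_zero.1 ((mul_eq_zero.1 this).resolve_left hx)
  have hcbeq : cb = cd := by
    have := hz0 2
    simp only [Matrix.cons_val_two, Matrix.tail_cons, Matrix.head_cons] at this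
    exact sub_eq_zero.1 ((mul_eq_zero.1 this).resolve_left hy)
  have hcceq : cc = cd := by
    have := hz0 0
    simp only [Matrix.cons_val_zero] at this
    exact sub_eq_zero.1 ((mul_eq_zero.1 this).resolve_left hz)
  have hcard : Fintype.card (Fin 3) = Module.finrank F (Fin 3 → F) := by simp
  let Bs := basisOfLinearIndependentOfCardEqFinrank htrip hcard
  have hBs : ⇑Bs = ![c, a, b] := coe_basisOfLinearIndependentOfCardEqFinrank htrip hcard
  have hM : M.mulVecLin = ca • LinearMap.id := by
    apply Bs.ext
    intro i
    fin_cases i <;>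
      simp [hBs, Matrix.mulVecLin_apply, hca, hcb, hcc, hcceq, hcaeq, hcbeq]
  have he : M *ᵥ e = ca • e := by
    have := congrArg (fun f => f e) hM
    simpa [Matrix.mulVecLin_apply] using this
  exact hmove (by rw [hsE]; exact fix_of_eigen (eigen_ne_zero ha hca) he)
lemma not_smul {x y : Fin 3 → F} (h : LinearIndependent F ![x, y]) (t : F) (hst : y = t • x) :
    False := no_rel h one_ne_zero (by rw [one_smul, hst])

lemma main5 {S : Set (Submodule F (Fin 3 → F))} (hindep : glIndep S)
    (V : Fin 5 → Submodule F (Fin 3 → F)) (hmem : ∀ i, V i ∈ S)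
    (hinj : Function.Injective V)
    (v : Fin 5 → Fin 3 → F) (hv : ∀ i, v i ≠ 0)
    (hs : ∀ i, V i = Submodule.span F {v i}) : False := by
  have ind : ∀ i j : Fin 5, i ≠ j → LinearIndependent F ![v i, v j] := fun i j hij =>
    pair_of_lines (hv i) (hv j) (fun h => hij (hinj (by rw [hs i, hs j, h])))
  have ne : ∀ i j : Fin 5, i ≠ j → V i ≠ V j := fun i j hij h => hij (hinj h)
  by_cases h2 : ∃ m n : F, v 2 = m • v 0 + n • v 1
  · obtain ⟨α, β, hαβ⟩ := h2
    by_cases h3 : ∃ m n : F, v 3 = m • v 0 + n • v 1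
    · obtain ⟨γ, δ, h3e⟩ := h3
      exact killer1 hindep (hmem 0) (hmem 1) (hmem 2) (hmem 3)
        (ne 1 0 (by decide)) (ne 2 0 (by decide)) (ne 3 0 (by decide))
        (hv 0) (hv 1) (hs 0) (hs 1) (hs 2) (hs 3)
        (ind 0 2 (by decide)) (ind 1 2 (by decide)) (ind 1 3 (by decide)) (ind 2 3 (by decide))
        one_ne_zero one_ne_zero (by rw [one_smul]; exact hαβ) (by rw [one_smul]; exact h3e)
    by_cases h4 : ∃ m n : F, v 4 = m • v 0 + n • v 1
    · obtain ⟨γ, δ, h4e⟩ := h4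
      exact killer1 hindep (hmem 0) (hmem 1) (hmem 2) (hmem 4)
        (ne 1 0 (by decide)) (ne 2 0 (by decide)) (ne 4 0 (by decide))
        (hv 0) (hv 1) (hs 0) (hs 1) (hs 2) (hs 4)
        (ind 0 2 (by decide)) (ind 1 2 (by decide)) (ind 1 4 (by decide)) (ind 2 4 (by decide))
        one_ne_zero one_ne_zero (by rw [one_smul]; exact hαβ) (by rw [one_smul]; exact h4e)
    have hα : α ≠ 0 := fun h => not_smul (ind 1 2 (by decide)) β (by rw [hαβ, h]; module)
    have hβ : β ≠ 0 := fun h => not_smul (ind 0 2 (by decide)) α (by rw [hαβ, h]; module)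
    obtain ⟨x, y, z, hrep4⟩ := exists_rep (ind 0 1 (by decide)) h3 (v 4)
    have hz : z ≠ 0 := fun h => h4 ⟨x, y, by rw [hrep4, h]; module⟩
    by_cases hx : x = 0
    · have hy : y ≠ 0 := fun h => not_smul (ind 3 4 (by decide)) z
        (by rw [hrep4, hx, h]; module)
      refine killer2 hindep (hmem 0) (hmem 2) (hmem 3) (hmem 4) (hmem 1)
        (ne 0 1 (by decide)) (ne 2 1 (by decide)) (ne 3 1 (by decide)) (ne 4 1 (by decide))
        (hv 0) (hs 0) (hs 2) (hs 3) (hs 4) (hs 1)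
        (ind 0 2 (by decide))
        (fun ⟨m, n, e⟩ => h3 ⟨m + n * α, n * β, by rw [e, hαβ]; module⟩)
        hβ (neg_ne_zero.2 (mul_ne_zero hy hα)) hy (mul_ne_zero hz hβ) ?_
      rw [hx] at hrep4
      linear_combination (norm := module) β • hrep4 - y • hαβ
    by_cases hy : y = 0
    · refine killer2 hindep (hmem 1) (hmem 2) (hmem 3) (hmem 4) (hmem 0)
        (ne 1 0 (by decide)) (ne 2 0 (by decide)) (ne 3 0 (by decide)) (ne 4 0 (by decide))
        (hv 1) (hs 1) (hs 2) (hs 3) (hs 4) (hs 0)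
        (ind 1 2 (by decide))
        (fun ⟨m, n, e⟩ => h3 ⟨n * α, m + n * β, by rw [e, hαβ]; module⟩)
        hα (neg_ne_zero.2 (mul_ne_zero hx hβ)) hx (mul_ne_zero hz hα) ?_
      rw [hy] at hrep4
      linear_combination (norm := module) α • hrep4 - x • hαβ
    exact killer2 hindep (hmem 0) (hmem 1) (hmem 3) (hmem 4) (hmem 2)
      (ne 0 2 (by decide)) (ne 1 2 (by decide)) (ne 3 2 (by decide)) (ne 4 2 (by decide))
      (hv 0) (hs 0) (hs 1) (hs 3) (hs 4) (hs 2)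
      (ind 0 1 (by decide)) h3
      one_ne_zero hx hy hz (by rw [one_smul]; exact hrep4)
  · obtain ⟨x, y, z, hrep3⟩ := exists_rep (ind 0 1 (by decide)) h2 (v 3)
    by_cases hz : z = 0
    · have hx : x ≠ 0 := fun h => not_smul (ind 1 3 (by decide)) y
        (by rw [hrep3, hz, h]; module)
      have hy : y ≠ 0 := fun h => not_smul (ind 0 3 (by decide)) x
        (by rw [hrep3, hz, h]; module)
      obtain ⟨X, Y, Z, hrep4⟩ := exists_rep (ind 0 1 (by decide)) h2 (v 4)
      by_cases hZ : Z = 0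
      · exact killer1 hindep (hmem 0) (hmem 1) (hmem 3) (hmem 4)
          (ne 1 0 (by decide)) (ne 3 0 (by decide)) (ne 4 0 (by decide))
          (hv 0) (hv 1) (hs 0) (hs 1) (hs 3) (hs 4)
          (ind 0 3 (by decide)) (ind 1 3 (by decide)) (ind 1 4 (by decide)) (ind 3 4 (by decide))
          one_ne_zero one_ne_zero
          (by rw [one_smul, hrep3, hz]; module) (by rw [one_smul, hrep4, hZ]; module)
      by_cases hX : X = 0
      · have hY : Y ≠ 0 := fun h => not_smul (ind 2 4 (by decide)) Z
          (by rw [hrep4, hX, h]; module)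
        refine killer2 hindep (hmem 0) (hmem 3) (hmem 2) (hmem 4) (hmem 1)
          (ne 0 1 (by decide)) (ne 3 1 (by decide)) (ne 2 1 (by decide)) (ne 4 1 (by decide))
          (hv 0) (hs 0) (hs 3) (hs 2) (hs 4) (hs 1)
          (ind 0 3 (by decide))
          (fun ⟨m, n, e⟩ => h2 ⟨m + n * x, n * y, by rw [e, hrep3, hz]; module⟩)
          hy (neg_ne_zero.2 (mul_ne_zero hY hx)) hY (mul_ne_zero hZ hy) ?_
        rw [hX] at hrep4; rw [hz] at hrep3
        linear_combination (norm := module) y • hrep4 - Y • hrep3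
      by_cases hY : Y = 0
      · refine killer2 hindep (hmem 1) (hmem 3) (hmem 2) (hmem 4) (hmem 0)
          (ne 1 0 (by decide)) (ne 3 0 (by decide)) (ne 2 0 (by decide)) (ne 4 0 (by decide))
          (hv 1) (hs 1) (hs 3) (hs 2) (hs 4) (hs 0)
          (ind 1 3 (by decide))
          (fun ⟨m, n, e⟩ => h2 ⟨n * x, m + n * y, by rw [e, hrep3, hz]; module⟩)
          hx (neg_ne_zero.2 (mul_ne_zero hX hy)) hX (mul_ne_zero hZ hx) ?_
        rw [hY] at hrep4; rw [hz] at hrep3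
        linear_combination (norm := module) x • hrep4 - X • hrep3
      exact killer2 hindep (hmem 0) (hmem 1) (hmem 2) (hmem 4) (hmem 3)
        (ne 0 3 (by decide)) (ne 1 3 (by decide)) (ne 2 3 (by decide)) (ne 4 3 (by decide))
        (hv 0) (hs 0) (hs 1) (hs 2) (hs 4) (hs 3)
        (ind 0 1 (by decide)) h2
        one_ne_zero hX hY hZ (by rw [one_smul]; exact hrep4)
    by_cases hy : y = 0
    · have hx : x ≠ 0 := fun h => not_smul (ind 2 3 (by decide)) z
        (by rw [hrep3, hy, h]; module)
      have hncm : ¬ ∃ m n : F, v 1 = m • v 0 + n • v 2 := by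
        rintro ⟨m, n, e⟩
        by_cases hn : n = 0
        · exact not_smul (ind 0 1 (by decide)) m (by rw [e, hn]; module)
        · exact h2 ⟨-(n⁻¹ * m), n⁻¹, by rw [e]; match_scalars <;> field_simp <;> ring⟩
      obtain ⟨X, Y, Z, hrep4⟩ := exists_rep (ind 0 2 (by decide)) hncm (v 4)
      by_cases hZ : Z = 0
      · exact killer1 hindep (hmem 0) (hmem 2) (hmem 3) (hmem 4)
          (ne 2 0 (by decide)) (ne 3 0 (by decide)) (ne 4 0 (by decide))
          (hv 0) (hv 2) (hs 0) (hs 2) (hs 3) (hs 4)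
          (ind 0 3 (by decide)) (ind 2 3 (by decide)) (ind 2 4 (by decide)) (ind 3 4 (by decide))
          one_ne_zero one_ne_zero
          (by rw [one_smul, hrep3, hy]; module) (by rw [one_smul, hrep4, hZ]; module)
      by_cases hX : X = 0
      · have hY : Y ≠ 0 := fun h => not_smul (ind 1 4 (by decide)) Z
          (by rw [hrep4, hX, h]; module)
        refine killer2 hindep (hmem 0) (hmem 3) (hmem 1) (hmem 4) (hmem 2)
          (ne 0 2 (by decide)) (ne 3 2 (by decide)) (ne 1 2 (by decide)) (ne 4 2 (by decide))
          (hv 0) (hs 0) (hs 3) (hs 1) (hs 4) (hs 2)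
          (ind 0 3 (by decide))
          (fun ⟨m, n, e⟩ => hncm ⟨m + n * x, n * z, by rw [e, hrep3, hy]; module⟩)
          hz (neg_ne_zero.2 (mul_ne_zero hY hx)) hY (mul_ne_zero hZ hz) ?_
        rw [hX] at hrep4; rw [hy] at hrep3
        linear_combination (norm := module) z • hrep4 - Y • hrep3
      by_cases hY : Y = 0
      · refine killer2 hindep (hmem 2) (hmem 3) (hmem 1) (hmem 4) (hmem 0)
          (ne 2 0 (by decide)) (ne 3 0 (by decide)) (ne 1 0 (by decide)) (ne 4 0 (by decide))
          (hv 2) (hs 2) (hs 3) (hs 1) (hs 4) (hs 0)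
          (ind 2 3 (by decide))
          (fun ⟨m, n, e⟩ => hncm ⟨n * x, m + n * z, by rw [e, hrep3, hy]; module⟩)
          hx (neg_ne_zero.2 (mul_ne_zero hX hz)) hX (mul_ne_zero hZ hx) ?_
        rw [hY] at hrep4; rw [hy] at hrep3
        linear_combination (norm := module) x • hrep4 - X • hrep3
      exact killer2 hindep (hmem 0) (hmem 2) (hmem 1) (hmem 4) (hmem 3)
        (ne 0 3 (by decide)) (ne 2 3 (by decide)) (ne 1 3 (by decide)) (ne 4 3 (by decide))
        (hv 0) (hs 0) (hs 2) (hs 1) (hs 4) (hs 3)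
        (ind 0 2 (by decide)) hncm
        one_ne_zero hX hY hZ (by rw [one_smul]; exact hrep4)
    by_cases hx : x = 0
    · have hncm : ¬ ∃ m n : F, v 0 = m • v 1 + n • v 2 := by
        rintro ⟨m, n, e⟩
        by_cases hn : n = 0
        · exact not_smul (ind 1 0 (by decide)) m (by rw [e, hn]; module)
        · exact h2 ⟨n⁻¹, -(n⁻¹ * m), by rw [e]; match_scalars <;> field_simp <;> ring⟩
      obtain ⟨X, Y, Z, hrep4⟩ := exists_rep (ind 1 2 (by decide)) hncm (v 4)
      by_cases hZ : Z = 0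
      · exact killer1 hindep (hmem 1) (hmem 2) (hmem 3) (hmem 4)
          (ne 2 1 (by decide)) (ne 3 1 (by decide)) (ne 4 1 (by decide))
          (hv 1) (hv 2) (hs 1) (hs 2) (hs 3) (hs 4)
          (ind 1 3 (by decide)) (ind 2 3 (by decide)) (ind 2 4 (by decide)) (ind 3 4 (by decide))
          one_ne_zero one_ne_zero
          (by rw [one_smul, hrep3, hx]; module) (by rw [one_smul, hrep4, hZ]; module)
      have hyne : y ≠ 0 := fun h => not_smul (ind 2 3 (by decide)) z
        (by rw [hrep3, hx, h]; module)
      by_cases hX : X = 0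
      · have hY : Y ≠ 0 := fun h => not_smul (ind 0 4 (by decide)) Z
          (by rw [hrep4, hX, h]; module)
        refine killer2 hindep (hmem 1) (hmem 3) (hmem 0) (hmem 4) (hmem 2)
          (ne 1 2 (by decide)) (ne 3 2 (by decide)) (ne 0 2 (by decide)) (ne 4 2 (by decide))
          (hv 1) (hs 1) (hs 3) (hs 0) (hs 4) (hs 2)
          (ind 1 3 (by decide))
          (fun ⟨m, n, e⟩ => hncm ⟨m + n * y, n * z, by rw [e, hrep3, hx]; module⟩)
          hz (neg_ne_zero.2 (mul_ne_zero hY hyne)) hY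
          (mul_ne_zero hZ hz) ?_
        rw [hX] at hrep4; rw [hx] at hrep3
        linear_combination (norm := module) z • hrep4 - Y • hrep3
      by_cases hY : Y = 0
      · refine killer2 hindep (hmem 2) (hmem 3) (hmem 0) (hmem 4) (hmem 1)
          (ne 2 1 (by decide)) (ne 3 1 (by decide)) (ne 0 1 (by decide)) (ne 4 1 (by decide))
          (hv 2) (hs 2) (hs 3) (hs 0) (hs 4) (hs 1)
          (ind 2 3 (by decide))
          (fun ⟨m, n, e⟩ => hncm ⟨n * y, m + n * z, by rw [e, hrep3, hx]; module⟩)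
          hyne (neg_ne_zero.2 (mul_ne_zero hX hz)) hX (mul_ne_zero hZ hyne) ?_
        rw [hY] at hrep4; rw [hx] at hrep3
        linear_combination (norm := module) y • hrep4 - X • hrep3
      exact killer2 hindep (hmem 1) (hmem 2) (hmem 0) (hmem 4) (hmem 3)
        (ne 1 3 (by decide)) (ne 2 3 (by decide)) (ne 0 3 (by decide)) (ne 4 3 (by decide))
        (hv 1) (hs 1) (hs 2) (hs 0) (hs 4) (hs 3)
        (ind 1 2 (by decide)) hncm
        one_ne_zero hX hY hZ (by rw [one_smul]; exact hrep4)
    exact killer2 hindep (hmem 0) (hmem 1) (hmem 2) (hmem 3) (hmem 4)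
      (ne 0 4 (by decide)) (ne 1 4 (by decide)) (ne 2 4 (by decide)) (ne 3 4 (by decide))
      (hv 0) (hs 0) (hs 1) (hs 2) (hs 3) (hs 4)
      (ind 0 1 (by decide)) h2
      one_ne_zero hx hy hz (by rw [one_smul]; exact hrep3)

lemma line_vec {V : Submodule F (Fin 3 → F)} (h : Module.finrank F V = 1) :
    ∃ v : Fin 3 → F, v ≠ 0 ∧ V = Submodule.span F {v} := by
  obtain ⟨⟨w, hwV⟩, hw0, hall⟩ := finrank_eq_one_iff'.1 h
  refine ⟨w, by simpa [Subtype.ext_iff] using hw0, le_antisymm ?_ ?_⟩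
  · intro u hu
    obtain ⟨c, hc⟩ := hall ⟨u, hu⟩
    have : c • w = u := congrArg Subtype.val hc
    rw [← this]
    exact Submodule.smul_mem _ _ (Submodule.mem_span_singleton_self w)
  · rw [Submodule.span_le]
    simpa using hwV

end Aux

theorem stmt_15 (F : Type*) [Field F]
    (S : Set (Submodule F (Fin 3 → F)))
    (hlines : ∀ V ∈ S, Module.finrank F V = 1)
    (hindep : glIndep S) :
    S.Finite ∧ S.ncard ≤ 4 := by
  have hfive : ∀ (t : Finset (Submodule F (Fin 3 → F))), ↑t ⊆ S → t.card ≠ 5 := by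
    intro t hts hcard
    let eq := t.equivFinOfCardEq hcard
    have hmem : ∀ i : Fin 5, (eq.symm i : Submodule F (Fin 3 → F)) ∈ S :=
      fun i => hts (eq.symm i).2
    have hinj : Function.Injective (fun i : Fin 5 => (eq.symm i : Submodule F (Fin 3 → F))) :=
      fun i j h => eq.symm.injective (Subtype.ext h)
    choose v hv hsv using fun i : Fin 5 => line_vec (hlines _ (hmem i))
    exact main5 hindep _ hmem hinj v hv hsv
  have hfin : S.Finite := by
    by_contra h
    obtain ⟨t, hts, hcard⟩ := Set.Infinite.exists_subset_card_eq h 5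
    exact hfive t hts hcard
  refine ⟨hfin, ?_⟩
  by_contra h
  push_neg at h
  obtain ⟨t, hts, hcard⟩ := Set.exists_subset_card_eq (show 5 ≤ S.ncard from h)
  have ht : t.Finite := hfin.subset hts
  refine hfive ht.toFinset (by simpa using hts) ?_
  rw [← Set.ncard_eq_toFinset_card t ht]
  exact hcard
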